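/- Let q be a prime power, n a positive integer, and 0 ≤ k ≤ n. The number N_k of k-normal elements of F_{q^n} over F_q is given by N_k = Σ_{h | x^n−1, deg(h) = n−k} Φ(h), where the sum runs over monic divisors h of x^n − 1 in F_q[x] of degree n − k. -/

import Mathlib

open Polynomial

/-- The `q`-associate of `f` applied to `x`: `L_f(x) = Σᵢ aᵢ x^(q^i)`. -/
noncomputable def qAssoc (q : ℕ) {F E : Type*} [CommSemiring F] [CommSemiring E] [Algebra F E]
    (f : Polynomial F) (x : E) : E :=
  f.sum fun i a => algebraMap F E a * x ^ q ^ i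

/-- `g` is the `F_q`-order of `α`: `g` is the monic generator of the ideal of
polynomials `f` with `L_f(α) = 0`. -/
def IsFqOrder (q : ℕ) {F E : Type*} [CommSemiring F] [CommSemiring E] [Algebra F E]
    (α : E) (g : Polynomial F) : Prop :=
  g.Monic ∧ ∀ f : Polynomial F, qAssoc q f α = 0 ↔ g ∣ f

/-- `α` is `k`-normal over `F`: the span of the conjugates `α^(q^i)`, `0 ≤ i ≤ n-1`,
has dimension `n - k`. -/
def IskNormal (q n k : ℕ) (F : Type*) {E : Type*} [Field F] [Field E] [Algebra F E]
    (α : E) : Prop :=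
  Module.finrank F (Submodule.span F (Set.range fun i : Fin n => α ^ q ^ (i : ℕ))) = n - k

/-- `α` is a primitive element of the finite field `E`: it generates `Eˣ`. -/
def IsPrimitiveElt {E : Type*} [Field E] (α : E) : Prop :=
  ∀ x : E, x ≠ 0 → ∃ m : ℕ, x = α ^ m

-- Number of squarefree divisors of a natural number.
open Classical in
noncomputable def Wnat (t : ℕ) : ℕ := (t.divisors.filter Squarefree).card

/-- Number of monic squarefree divisors of a polynomial. -/
noncomputable def Wpoly {F : Type*} [Field F] (g : Polynomial F) : ℕ :=
  Set.ncard {h : Polynomial F | h.Monic ∧ Squarefree h ∧ h ∣ g}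

/-- Polynomial Euler function `Φ(g) = |(F[x]/⟨g⟩)ˣ|`. -/
noncomputable def PhiPoly {F : Type*} [Field F] (g : Polynomial F) : ℕ :=
  Nat.card ((Polynomial F ⧸ Ideal.span {g})ˣ)

-- The polynomial Möbius function over `F`.
open Classical in
noncomputable def muq {F : Type*} [Field F] (f : Polynomial F) : ℤ :=
  if Squarefree f then
    (-1) ^ (UniqueFactorizationMonoid.normalizedFactors f).toFinset.card
  else 0

/-- The `q`-associate of `f` as a polynomial with coefficients in the extension `E`. -/
noncomputable def LPoly (q : ℕ) {F : Type*} (E : Type*) [CommSemiring F] [CommSemiring E]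
    [Algebra F E] (f : Polynomial F) : Polynomial E :=
  f.sum fun i a => Polynomial.C (algebraMap F E a) * Polynomial.X ^ q ^ i

-- `Ψ_f = ∏_{α : m_α = f} (X - α)` over `E`.
open Classical in
noncomputable def PsiPoly (q : ℕ) {F : Type*} (E : Type*) [Field F] [Field E] [Fintype E]
    [Algebra F E] (f : Polynomial F) : Polynomial E :=
  ∏ α ∈ Finset.univ.filter (fun α : E => IsFqOrder q α f), (X - C α)

/-- `n` is `F_q`-practical: `x^n - 1` has a divisor of each degree `1 ≤ k ≤ n-1` over `F`. -/
def FqPractical (F : Type*) [Field F] (n : ℕ) : Prop :=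
  ∀ k : ℕ, 1 ≤ k → k ≤ n - 1 →
    ∃ f : Polynomial F, f.natDegree = k ∧ f ∣ (X ^ n - 1 : Polynomial F)

set_option linter.unusedSectionVars false
section Frob

variable {F E : Type*} [Field F] [Fintype F] [Field E] [Fintype E] [Algebra F E]

/-- The Frobenius `x ↦ x ^ |F|` as an `F`-linear endomorphism of `E`. -/
noncomputable def frobL (F E : Type*) [Field F] [Fintype F] [Field E] [Fintype E]
    [Algebra F E] : Module.End F E where
  toFun x := x ^ Fintype.card F
  map_add' x y := by
    obtain ⟨m, hp, hcard⟩ := FiniteField.card F (ringChar F)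
    haveI : Fact (ringChar F).Prime := ⟨hp⟩
    haveI : CharP E (ringChar F) :=
      charP_of_injective_algebraMap (algebraMap F E).injective _
    simp only [hcard]
    exact add_pow_char_pow (R := E) (p := ringChar F) (n := (m : ℕ)) (x := x) (y := y)
  map_smul' c x := by
    simp only [RingHom.id_apply, Algebra.smul_def, mul_pow, ← map_pow,
      FiniteField.pow_card]

@[simp] lemma frobL_apply (x : E) : frobL F E x = x ^ Fintype.card F := rfl

lemma frobL_pow_apply (i : ℕ) (x : E) :
    (frobL F E ^ i) x = x ^ Fintype.card F ^ i := by
  induction i with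
  | zero => simp
  | succ m ih =>
      rw [pow_succ', Module.End.mul_apply, ih, frobL_apply, ← pow_mul, ← pow_succ]

lemma aeval_frobL_apply (f : Polynomial F) (α : E) :
    Polynomial.aeval (frobL F E) f α =
      ∑ i ∈ f.support, algebraMap F E (f.coeff i) * α ^ Fintype.card F ^ i := by
  rw [Polynomial.aeval_def, Polynomial.eval₂_eq_sum, Polynomial.sum_def,
    LinearMap.sum_apply]
  refine Finset.sum_congr rfl fun i _ => ?_
  rw [Module.End.mul_apply, Module.algebraMap_end_apply, frobL_pow_apply,
    Algebra.smul_def]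

lemma LPoly_eval (f : Polynomial F) (α : E) :
    (LPoly (Fintype.card F) E f).eval α = Polynomial.aeval (frobL F E) f α := by
  rw [aeval_frobL_apply, LPoly, Polynomial.sum_def, Polynomial.eval_finset_sum]
  refine Finset.sum_congr rfl fun i _ => ?_
  rw [Polynomial.eval_mul, Polynomial.eval_C, Polynomial.eval_pow, Polynomial.eval_X]

lemma LPoly_coeff (f : Polynomial F) (hf : f.Monic) :
    (LPoly (Fintype.card F) E f).coeff (Fintype.card F ^ f.natDegree) = 1 := by
  classical
  rw [LPoly, Polynomial.sum_def, Polynomial.finset_sum_coeff]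
  have hq : 2 ≤ Fintype.card F := Fintype.one_lt_card
  rw [Finset.sum_eq_single f.natDegree]
  · simp [Polynomial.coeff_C_mul, Polynomial.coeff_X_pow, hf.coeff_natDegree]
  · intro i _ hne
    have : Fintype.card F ^ f.natDegree ≠ Fintype.card F ^ i := by
      intro h
      exact hne (Nat.pow_right_injective hq h.symm)
    simp [Polynomial.coeff_C_mul, Polynomial.coeff_X_pow, this]
  · intro hmem
    exact absurd (Polynomial.natDegree_mem_support_of_nonzero hf.ne_zero) hmem

lemma LPoly_natDegree (f : Polynomial F) (hf : f.Monic) :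
    (LPoly (Fintype.card F) E f).natDegree = Fintype.card F ^ f.natDegree := by
  have hq : 0 < Fintype.card F := Fintype.card_pos
  refine le_antisymm ?_ ?_
  · rw [LPoly, Polynomial.sum_def]
    refine Polynomial.natDegree_sum_le_of_forall_le _ _ fun i hi => ?_
    refine (Polynomial.natDegree_C_mul_X_pow_le _ _).trans ?_
    exact Nat.pow_le_pow_right hq (Polynomial.le_natDegree_of_mem_supp i hi)
  · refine Polynomial.le_natDegree_of_ne_zero ?_
    rw [LPoly_coeff f hf]
    exact one_ne_zero

lemma LPoly_ne_zero (f : Polynomial F) (hf : f.Monic) :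
    LPoly (Fintype.card F) E f ≠ 0 := fun h => by
  have := LPoly_coeff (E := E) f hf
  rw [h] at this
  simp at this

end Frob

section Ker

set_option linter.unusedSectionVars false

variable {F E : Type*} [Field F] [Fintype F] [Field E] [Fintype E] [Algebra F E]

lemma finrank_ker_le (g : Polynomial F) (hg : g.Monic) :
    Module.finrank F (LinearMap.ker (Polynomial.aeval (frobL F E) g)) ≤ g.natDegree := by
  classical
  set P := LPoly (Fintype.card F) E g with hP
  have hP0 : P ≠ 0 := LPoly_ne_zero g hg
  haveI : Fintype (LinearMap.ker (Polynomial.aeval (frobL F E) g)) := Fintype.ofFinite _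
  have hinj : Function.Injective
      (fun x : LinearMap.ker (Polynomial.aeval (frobL F E) g) =>
        (⟨x.1, by
          rw [Multiset.mem_toFinset, Polynomial.mem_roots hP0]
          show Polynomial.IsRoot P x.1
          show Polynomial.eval x.1 P = 0
          rw [hP, LPoly_eval]
          exact x.2⟩ : P.roots.toFinset)) := by
    intro a b hab
    exact Subtype.ext (by simpa [Subtype.mk.injEq] using hab)
  have h1 : Fintype.card (LinearMap.ker (Polynomial.aeval (frobL F E) g)) ≤
      P.natDegree := by
    refine (Fintype.card_le_of_injective _ hinj).trans ?_
    refine le_trans ?_ (Polynomial.card_roots' P)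
    rw [Fintype.card_coe]
    exact Multiset.toFinset_card_le _
  rw [Module.card_eq_pow_finrank (K := F), hP, LPoly_natDegree g hg] at h1
  exact (Nat.pow_le_pow_iff_right Fintype.one_lt_card).1 h1

lemma aeval_frobL_X_pow_sub_one {n : ℕ} (hdim : Module.finrank F E = n) :
    Polynomial.aeval (frobL F E) ((X : Polynomial F) ^ n - 1) = 0 := by
  have hcardE : Fintype.card E = Fintype.card F ^ n := by
    rw [Module.card_eq_pow_finrank (K := F) (V := E), hdim]
  ext α
  rw [map_sub, map_pow, Polynomial.aeval_X, map_one, LinearMap.sub_apply,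
    LinearMap.zero_apply, frobL_pow_apply, ← hcardE, FiniteField.pow_card,
    Module.End.one_apply, sub_self]

lemma finrank_ker_eq {n : ℕ} (hdim : Module.finrank F E = n) (hn : 0 < n)
    {g h : Polynomial F} (hg : g.Monic) (hh : h.Monic)
    (hgh : g * h = (X : Polynomial F) ^ n - 1) :
    Module.finrank F (LinearMap.ker (Polynomial.aeval (frobL F E) g)) = g.natDegree := by
  haveI : FiniteDimensional F E := Module.Finite.of_finite
  have hdeg : g.natDegree + h.natDegree = n := by
    have := Polynomial.natDegree_mul hg.ne_zero hh.ne_zero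
    rw [hgh] at this
    have h2 : ((X : Polynomial F) ^ n - 1).natDegree = n := by
      have : ((X : Polynomial F) ^ n - 1) = X ^ n - C 1 := by rw [map_one]
      rw [this, Polynomial.natDegree_X_pow_sub_C]
    omega
  have hrange : LinearMap.range (Polynomial.aeval (frobL F E) g) ≤
      LinearMap.ker (Polynomial.aeval (frobL F E) h) := by
    rintro x ⟨y, rfl⟩
    rw [LinearMap.mem_ker, ← Module.End.mul_apply, ← map_mul, mul_comm h g, hgh,
      aeval_frobL_X_pow_sub_one hdim, LinearMap.zero_apply]
  have h1 := LinearMap.finrank_range_add_finrank_ker (Polynomial.aeval (frobL F E) g)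
  rw [hdim] at h1
  have h2 : Module.finrank F (LinearMap.range (Polynomial.aeval (frobL F E) g)) ≤
      Module.finrank F (LinearMap.ker (Polynomial.aeval (frobL F E) h)) :=
    Submodule.finrank_mono hrange
  have h3 := finrank_ker_le (E := E) g hg
  have h4 := finrank_ker_le (E := E) h hh
  omega

lemma card_ker_aeval {n : ℕ} (hdim : Module.finrank F E = n) (hn : 0 < n)
    {g : Polynomial F} (hg : g.Monic) (hdvd : g ∣ (X : Polynomial F) ^ n - 1) :
    Nat.card {x : E | Polynomial.aeval (frobL F E) g x = 0} =
      Fintype.card F ^ g.natDegree := by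
  obtain ⟨h, hgh⟩ := hdvd
  have hGmonic : ((X : Polynomial F) ^ n - 1).Monic := by
    have := Polynomial.monic_X_pow_sub_C (1 : F) hn.ne'
    rwa [map_one] at this
  have hh : h.Monic := hg.of_mul_monic_left (by rw [← hgh]; exact hGmonic)
  haveI : Fintype (LinearMap.ker (Polynomial.aeval (frobL F E) g)) := Fintype.ofFinite _
  have e : Nat.card {x : E | Polynomial.aeval (frobL F E) g x = 0} =
      Nat.card (LinearMap.ker (Polynomial.aeval (frobL F E) g)) :=
    Nat.card_congr (Equiv.subtypeEquivRight fun x => (LinearMap.mem_ker).symm)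
  rw [e, Nat.card_eq_fintype_card, Module.card_eq_pow_finrank (K := F),
    finrank_ker_eq hdim hn hg hh hgh.symm]

end Ker

section Pord

set_option linter.unusedSectionVars false

variable (F : Type*) [Field F] {M : Type*} [AddCommGroup M] [Module (Polynomial F) M]

/-- Monic generator of the torsion ideal of `m`. -/
noncomputable def pord (m : M) : Polynomial F :=
  Submodule.IsPrincipal.generator (Ideal.torsionOf (Polynomial F) M m) *
    C (Submodule.IsPrincipal.generator (Ideal.torsionOf (Polynomial F) M m)).leadingCoeff⁻¹

variable {F}

lemma gen'_ne_zero {m : M} (hm : Ideal.torsionOf (Polynomial F) M m ≠ ⊥) :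
    Submodule.IsPrincipal.generator (Ideal.torsionOf (Polynomial F) M m) ≠ 0 := by
  intro h
  exact hm ((Submodule.IsPrincipal.eq_bot_iff_generator_eq_zero _).2 h)

lemma pord_monic {m : M} (hm : Ideal.torsionOf (Polynomial F) M m ≠ ⊥) :
    (pord F m).Monic :=
  Polynomial.monic_mul_leadingCoeff_inv (gen'_ne_zero hm)

lemma pord_dvd_iff {m : M} (hm : Ideal.torsionOf (Polynomial F) M m ≠ ⊥)
    (f : Polynomial F) : pord F m ∣ f ↔ f • m = 0 := by
  set g := Submodule.IsPrincipal.generator (Ideal.torsionOf (Polynomial F) M m) with hg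
  have hu : IsUnit (C g.leadingCoeff⁻¹) := by
    rw [Polynomial.isUnit_C]
    exact isUnit_iff_ne_zero.2 (inv_ne_zero (Polynomial.leadingCoeff_ne_zero.2 (gen'_ne_zero hm)))
  have h1 : pord F m ∣ f ↔ g ∣ f := by
    constructor
    · intro h; exact (dvd_mul_right g _).trans h
    · intro h
      rw [pord, ← hg]
      exact (IsUnit.mul_right_dvd hu).2 h
  rw [h1, ← Ideal.mem_torsionOf_iff m f, Submodule.IsPrincipal.mem_iff_generator_dvd]

lemma torsionOf_ne_bot_of_smul {m : M} {g : Polynomial F} (hg : g ≠ 0) (h : g • m = 0) :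
    Ideal.torsionOf (Polynomial F) M m ≠ ⊥ := by
  intro hb
  have : g ∈ Ideal.torsionOf (Polynomial F) M m := (Ideal.mem_torsionOf_iff m g).2 h
  rw [hb, Ideal.mem_bot] at this
  exact hg this

lemma pord_smul {m : M} (hm : Ideal.torsionOf (Polynomial F) M m ≠ ⊥) :
    pord F m • m = 0 := (pord_dvd_iff hm _).1 dvd_rfl

lemma pord_ne_monic_of_bot {m : M} (hm : Ideal.torsionOf (Polynomial F) M m = ⊥)
    {g : Polynomial F} (hg : g.Monic) : pord F m ≠ g := by
  have : Submodule.IsPrincipal.generator (Ideal.torsionOf (Polynomial F) M m) = 0 :=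
    (Submodule.IsPrincipal.eq_bot_iff_generator_eq_zero _).1 hm
  rw [pord, this, zero_mul]
  exact fun h => hg.ne_zero h.symm

lemma torsionOf_ne_bot_of_pord_monic {m : M} {g : Polynomial F} (hg : g.Monic)
    (h : pord F m = g) : Ideal.torsionOf (Polynomial F) M m ≠ ⊥ := by
  intro hb
  exact pord_ne_monic_of_bot hb hg h

lemma pord_eq_of_monic {m : M} {g : Polynomial F} (hg : g.Monic)
    (hiff : ∀ f : Polynomial F, f • m = 0 ↔ g ∣ f) : pord F m = g := by
  have hm : Ideal.torsionOf (Polynomial F) M m ≠ ⊥ :=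
    torsionOf_ne_bot_of_smul hg.ne_zero ((hiff g).2 dvd_rfl)
  refine Polynomial.eq_of_monic_of_associated (pord_monic hm) hg
    (associated_of_dvd_dvd ?_ ?_)
  · exact (pord_dvd_iff hm g).2 ((hiff g).2 dvd_rfl)
  · exact (hiff _).1 (pord_smul hm)

end Pord

section Divisors

variable {F : Type*} [Field F] [Fintype F]

lemma exists_monicDivisors (g : Polynomial F) (hg : g ≠ 0) :
    ∃ D : Finset (Polynomial F), ∀ h : Polynomial F, h ∈ D ↔ (h.Monic ∧ h ∣ g) := by
  have h1 : Finite (Polynomial.degreeLT F (g.natDegree + 1)) :=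
    Finite.of_equiv _ (Polynomial.degreeLTEquiv F _).symm.toEquiv
  have h2 : Set.Finite ((Polynomial.degreeLT F (g.natDegree + 1) : Submodule F (Polynomial F)) :
      Set (Polynomial F)) := Set.toFinite _
  have hfin : Set.Finite {h : Polynomial F | h.Monic ∧ h ∣ g} := by
    refine Set.Finite.subset h2 ?_
    rintro h ⟨hm, hdvd⟩
    simp only [SetLike.mem_coe, Polynomial.mem_degreeLT]
    calc Polynomial.degree h ≤ Polynomial.degree g := Polynomial.degree_le_of_dvd hdvd hg
    _ ≤ (g.natDegree : WithBot ℕ) := Polynomial.degree_le_natDegree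
    _ < ((g.natDegree + 1 : ℕ) : WithBot ℕ) := by exact_mod_cast lt_add_one _
  exact ⟨hfin.toFinset, fun h => hfin.mem_toFinset⟩

lemma natDegree_lt_of_dvd_monic {g h : Polynomial F} (hg : g.Monic) (hh : h.Monic)
    (hdvd : h ∣ g) (hne : h ≠ g) : h.natDegree < g.natDegree := by
  obtain ⟨u, rfl⟩ := hdvd
  have hu : u.Monic := hh.of_mul_monic_left hg
  have hd := Polynomial.natDegree_mul hh.ne_zero hu.ne_zero
  rcases Nat.eq_zero_or_pos u.natDegree with h0 | hpos
  · exfalso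
    have : u = 1 := hu.natDegree_eq_zero.1 h0
    rw [this, mul_one] at hne
    exact hne rfl
  · omega

end Divisors

section Count

set_option linter.unusedSectionVars false

variable {F : Type*} [Field F] [Fintype F]

lemma nat_card_fiber_sum {γ : Type*} [Finite γ] (s : Set γ) (c : γ → Polynomial F)
    (D : Finset (Polynomial F)) (hmem : ∀ x ∈ s, c x ∈ D)
    (hfib : ∀ x : γ, ∀ h ∈ D, c x = h → x ∈ s) :
    Nat.card s = ∑ h ∈ D, Nat.card {x : γ | c x = h} := by
  classical
  haveI : Fintype γ := Fintype.ofFinite γ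
  have h1 : Nat.card s = s.toFinset.card := by
    rw [Nat.card_coe_set_eq, Set.ncard_eq_toFinset_card']
  rw [h1, Finset.card_eq_sum_card_fiberwise (f := c) (t := D)
    (fun x hx => hmem x (Set.mem_toFinset.1 hx))]
  refine Finset.sum_congr rfl fun h hD => ?_
  have h2 : s.toFinset.filter (fun x => c x = h) = {x : γ | c x = h}.toFinset := by
    ext x
    simp only [Finset.mem_filter, Set.mem_toFinset, Set.mem_setOf_eq, and_iff_right_iff_imp]
    exact fun hc => hfib x h hD hc
  rw [h2, ← Set.ncard_eq_toFinset_card', ← Nat.card_coe_set_eq]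

lemma card_smul_eq_sum_pord {M : Type*} [AddCommGroup M] [Module (Polynomial F) M]
    [Finite M] {g : Polynomial F} (hg : g.Monic) {D : Finset (Polynomial F)}
    (hD : ∀ h : Polynomial F, h ∈ D ↔ (h.Monic ∧ h ∣ g)) :
    Nat.card {m : M | g • m = 0} = ∑ h ∈ D, Nat.card {m : M | pord F m = h} := by
  refine nat_card_fiber_sum _ (pord F) D ?_ ?_
  · intro m hm
    have hm' := torsionOf_ne_bot_of_smul hg.ne_zero hm
    rw [hD]
    exact ⟨pord_monic hm', (pord_dvd_iff hm' g).2 hm⟩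
  · intro m h hDmem hc
    rw [hD] at hDmem
    obtain ⟨hmon, hdvd⟩ := hDmem
    have hm' : Ideal.torsionOf (Polynomial F) M m ≠ ⊥ :=
      torsionOf_ne_bot_of_pord_monic hmon hc
    have : pord F m ∣ g := hc ▸ hdvd
    exact (pord_dvd_iff hm' g).1 this

lemma card_pord_eq {M₁ : Type*} {M₂ : Type*}
    [AddCommGroup M₁] [Module (Polynomial F) M₁] [Finite M₁]
    [AddCommGroup M₂] [Module (Polynomial F) M₂] [Finite M₂] :
    ∀ (N : ℕ) (g : Polynomial F), g.natDegree = N → g.Monic →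
    (∀ h : Polynomial F, h.Monic → h ∣ g →
      Nat.card {m : M₁ | h • m = 0} = Fintype.card F ^ h.natDegree) →
    (∀ h : Polynomial F, h.Monic → h ∣ g →
      Nat.card {m : M₂ | h • m = 0} = Fintype.card F ^ h.natDegree) →
    Nat.card {m : M₁ | pord F m = g} = Nat.card {m : M₂ | pord F m = g} := by
  intro N
  induction N using Nat.strong_induction_on with
  | _ N ih =>
    classical
    intro g hN hg hc₁ hc₂
    obtain ⟨D, hD⟩ := exists_monicDivisors g hg.ne_zero
    have hgD : g ∈ D := (hD g).2 ⟨hg, dvd_rfl⟩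
    have hsum₁ := card_smul_eq_sum_pord (M := M₁) hg hD
    have hsum₂ := card_smul_eq_sum_pord (M := M₂) hg hD
    rw [hc₁ g hg dvd_rfl] at hsum₁
    rw [hc₂ g hg dvd_rfl] at hsum₂
    rw [← Finset.add_sum_erase D _ hgD] at hsum₁ hsum₂
    have herase : ∀ h ∈ D.erase g,
        Nat.card {m : M₁ | pord F m = h} = Nat.card {m : M₂ | pord F m = h} := by
      intro h hmem
      have hne := Finset.ne_of_mem_erase hmem
      have hmemD := Finset.mem_of_mem_erase hmem
      rw [hD] at hmemD
      obtain ⟨hmon, hdvd⟩ := hmemD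
      have hlt : h.natDegree < N := hN ▸ natDegree_lt_of_dvd_monic hg hmon hdvd hne
      exact ih h.natDegree hlt h rfl hmon
        (fun h' hm' hd' => hc₁ h' hm' (hd'.trans hdvd))
        (fun h' hm' hd' => hc₂ h' hm' (hd'.trans hdvd))
    rw [Finset.sum_congr rfl herase] at hsum₁
    omega

end Count

section Quot

set_option linter.unusedSectionVars false

variable {F : Type*} [Field F] [Fintype F]

lemma quot_smul_mk (h f x : Polynomial F) :
    f • (Ideal.Quotient.mk (Ideal.span {h}) x) = Ideal.Quotient.mk (Ideal.span {h}) (f * x) := by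
  show f • (Submodule.Quotient.mk x : Polynomial F ⧸ Ideal.span {h}) =
    Submodule.Quotient.mk (f * x)
  rw [← Submodule.Quotient.mk_smul, smul_eq_mul]

lemma quot_finite (h : Polynomial F) (hh : h ≠ 0) :
    Finite (Polynomial F ⧸ Ideal.span {h}) := by
  have pb := AdjoinRoot.powerBasis (K := F) hh
  haveI : Module.Finite F (AdjoinRoot h) := Module.Finite.of_basis pb.basis
  exact (Module.finite_of_finite F : Finite (AdjoinRoot h))

lemma quot_card (h : Polynomial F) (hh : h ≠ 0) :
    Nat.card (Polynomial F ⧸ Ideal.span {h}) = Fintype.card F ^ h.natDegree := by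
  show Nat.card (AdjoinRoot h) = _
  have pb := AdjoinRoot.powerBasis (K := F) hh
  haveI : Module.Finite F (AdjoinRoot h) := Module.Finite.of_basis pb.basis
  haveI : Finite (AdjoinRoot h) := Module.finite_of_finite F
  haveI : Fintype (AdjoinRoot h) := Fintype.ofFinite _
  rw [Nat.card_eq_fintype_card, Module.card_eq_pow_finrank (K := F),
    (AdjoinRoot.powerBasis (K := F) hh).finrank, AdjoinRoot.powerBasis_dim]

/-- multiplication by `d` as a map `F[X]/(h) → F[X]/(h*d)` -/
noncomputable def mulQuot (h d : Polynomial F) :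
    (Polynomial F ⧸ Ideal.span {h}) →ₗ[Polynomial F] Polynomial F ⧸ Ideal.span {h * d} :=
  Submodule.liftQ (Ideal.span {h})
    ((Ideal.span {h * d}).mkQ.comp (LinearMap.mulRight (Polynomial F) d))
    (by
      intro x hx
      rw [Ideal.mem_span_singleton] at hx
      simp only [LinearMap.mem_ker, LinearMap.comp_apply, LinearMap.mulRight_apply,
        Submodule.mkQ_apply]
      rw [Submodule.Quotient.mk_eq_zero, Ideal.mem_span_singleton]
      exact mul_dvd_mul_right hx d)

lemma mulQuot_mk (h d x : Polynomial F) :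
    mulQuot h d (Ideal.Quotient.mk (Ideal.span {h}) x) =
      Ideal.Quotient.mk (Ideal.span {h * d}) (x * d) := rfl

lemma quot_card_smul (h d : Polynomial F) (hh : h ≠ 0) (hd : d ≠ 0) :
    Nat.card {u : Polynomial F ⧸ Ideal.span {h * d} | h • u = 0} =
      Fintype.card F ^ h.natDegree := by
  have hbij : Function.Bijective (fun u : Polynomial F ⧸ Ideal.span {h} =>
      (⟨mulQuot h d u, by
        obtain ⟨x, rfl⟩ := Ideal.Quotient.mk_surjective u
        rw [Set.mem_setOf_eq, mulQuot_mk, quot_smul_mk, Ideal.Quotient.eq_zero_iff_mem,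
          Ideal.mem_span_singleton]
        exact ⟨x, by ring⟩⟩ :
        {u : Polynomial F ⧸ Ideal.span {h * d} | h • u = 0})) := by
    constructor
    · intro a b hab
      have hab' : mulQuot h d a = mulQuot h d b := congrArg Subtype.val hab
      obtain ⟨x, rfl⟩ := Ideal.Quotient.mk_surjective a
      obtain ⟨y, rfl⟩ := Ideal.Quotient.mk_surjective b
      rw [mulQuot_mk, mulQuot_mk, Ideal.Quotient.eq, ← sub_mul] at hab'
      rw [Ideal.mem_span_singleton] at hab'
      rw [Ideal.Quotient.eq, Ideal.mem_span_singleton]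
      exact (mul_dvd_mul_iff_right hd).1 hab'
    · rintro ⟨u, hu⟩
      obtain ⟨y, rfl⟩ := Ideal.Quotient.mk_surjective u
      rw [Set.mem_setOf_eq, quot_smul_mk, Ideal.Quotient.eq_zero_iff_mem,
        Ideal.mem_span_singleton] at hu
      obtain ⟨w, hw⟩ := hu
      have hyd : y = d * w := by
        have := hw
        rw [mul_assoc] at this
        exact mul_left_cancel₀ hh this
      refine ⟨Ideal.Quotient.mk (Ideal.span {h}) w, ?_⟩
      apply Subtype.ext
      show mulQuot h d (Ideal.Quotient.mk (Ideal.span {h}) w) =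
        Ideal.Quotient.mk (Ideal.span {h * d}) y
      rw [mulQuot_mk]
      congr 1
      rw [hyd, mul_comm]
  rw [← Nat.card_congr (Equiv.ofBijective _ hbij), quot_card h hh]

lemma quot_smul {h : Polynomial F} (f : Polynomial F) (u : Polynomial F ⧸ Ideal.span {h}) :
    f • u = (Ideal.Quotient.mk (Ideal.span {h}) f) * u := by
  obtain ⟨x, rfl⟩ := Ideal.Quotient.mk_surjective u
  rw [quot_smul_mk, ← map_mul]

lemma isUnit_iff_pord {h : Polynomial F} (hh : h.Monic)
    (u : Polynomial F ⧸ Ideal.span {h}) : IsUnit u ↔ pord F u = h := by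
  haveI : Finite (Polynomial F ⧸ Ideal.span {h}) := quot_finite h hh.ne_zero
  constructor
  · intro hu
    refine pord_eq_of_monic hh fun f => ?_
    rw [quot_smul, hu.mul_left_eq_zero, Ideal.Quotient.eq_zero_iff_mem,
      Ideal.mem_span_singleton]
  · intro hp
    have hm : Ideal.torsionOf (Polynomial F) (Polynomial F ⧸ Ideal.span {h}) u ≠ ⊥ :=
      torsionOf_ne_bot_of_pord_monic hh hp
    have hdvd : ∀ f : Polynomial F, f • u = 0 ↔ h ∣ f := fun f => by
      rw [← pord_dvd_iff hm f, hp]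
    have hinj : Function.Injective (fun a : Polynomial F ⧸ Ideal.span {h} => a * u) := by
      intro a b hab
      obtain ⟨f, hf⟩ := Ideal.Quotient.mk_surjective (a - b)
      have h0 : (a - b) * u = 0 := by
        rw [sub_mul, sub_eq_zero]
        exact hab
      rw [← hf, ← quot_smul] at h0
      have : h ∣ f := (hdvd f).1 h0
      have hz : Ideal.Quotient.mk (Ideal.span {h}) f = 0 := by
        rw [Ideal.Quotient.eq_zero_iff_mem, Ideal.mem_span_singleton]
        exact this
      rw [hf] at hz
      exact sub_eq_zero.1 hz
    obtain ⟨v, hv⟩ := (Finite.injective_iff_surjective.1 hinj) 1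
    exact IsUnit.of_mul_eq_one (a := u) v (by rw [mul_comm]; exact hv)

end Quot

section Span

set_option linter.unusedSectionVars false

variable {F E : Type*} [Field F] [Fintype F] [Field E] [Fintype E] [Algebra F E]

lemma aeval_smul_of (φ : Module.End F E) (f : Polynomial F) (α : E) :
    f • (Module.AEval.of F E φ α) = Module.AEval.of F E φ (Polynomial.aeval φ f α) :=
  (Module.AEval.of_aeval_smul φ f α).symm

lemma monic_G {n : ℕ} (hn : 0 < n) : ((X : Polynomial F) ^ n - 1).Monic := by
  have := Polynomial.monic_X_pow_sub_C (1 : F) hn.ne'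
  rwa [map_one] at this

lemma torsionOf_of_ne_bot {n : ℕ} (hdim : Module.finrank F E = n) (hn : 0 < n) (α : E) :
    Ideal.torsionOf (Polynomial F) (Module.AEval' (frobL F E))
      (Module.AEval.of F E (frobL F E) α) ≠ ⊥ := by
  refine torsionOf_ne_bot_of_smul (monic_G hn).ne_zero ?_
  rw [aeval_smul_of, aeval_frobL_X_pow_sub_one hdim]
  rw [LinearMap.zero_apply, map_zero]

lemma aeval_eq_zero_iff_pord_dvd {n : ℕ} (hdim : Module.finrank F E = n) (hn : 0 < n)
    (α : E) (f : Polynomial F) :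
    Polynomial.aeval (frobL F E) f α = 0 ↔
      pord F (Module.AEval.of F E (frobL F E) α) ∣ f := by
  rw [pord_dvd_iff (torsionOf_of_ne_bot hdim hn α) f, aeval_smul_of]
  constructor
  · intro h; rw [h, map_zero]
  · intro h
    exact (LinearEquiv.map_eq_zero_iff (Module.AEval.of F E (frobL F E))).1 h

lemma pord_dvd_G {n : ℕ} (hdim : Module.finrank F E = n) (hn : 0 < n) (α : E) :
    pord F (Module.AEval.of F E (frobL F E) α) ∣ (X : Polynomial F) ^ n - 1 := by
  rw [← aeval_eq_zero_iff_pord_dvd hdim hn α, aeval_frobL_X_pow_sub_one hdim,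
    LinearMap.zero_apply]

lemma finrank_span_conjugates {n : ℕ} (hdim : Module.finrank F E = n) (hn : 0 < n) (α : E) :
    Module.finrank F (Submodule.span F
        (Set.range fun i : Fin n => α ^ Fintype.card F ^ (i : ℕ))) =
      (pord F (Module.AEval.of F E (frobL F E) α)).natDegree := by
  classical
  haveI : FiniteDimensional F E := Module.Finite.of_finite
  set φ := frobL F E with hφ
  have hGm : ((X : Polynomial F) ^ n - 1).Monic := monic_G hn
  have hG0 : Polynomial.aeval φ ((X : Polynomial F) ^ n - 1) = 0 :=
    aeval_frobL_X_pow_sub_one hdim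
  have hne := torsionOf_of_ne_bot hdim hn α
  set g := pord F (Module.AEval.of F E φ α) with hgdef
  have hgmon : g.Monic := pord_monic hne
  have hsm : ∀ f : Polynomial F, Polynomial.aeval φ f α = 0 ↔ g ∣ f :=
    aeval_eq_zero_iff_pord_dvd hdim hn α
  have hgdvd : g ∣ (X : Polynomial F) ^ n - 1 := pord_dvd_G hdim hn α
  let T : Polynomial F →ₗ[F] E :=
    { toFun := fun f => Polynomial.aeval φ f α
      map_add' := fun f₁ f₂ => by simp only [map_add, LinearMap.add_apply]
      map_smul' := fun c f => by simp only [map_smul, LinearMap.smul_apply, RingHom.id_apply] }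
  have hT : ∀ f, T f = Polynomial.aeval φ f α := fun f => rfl
  have hrange : LinearMap.range T =
      Submodule.span F (Set.range fun i : Fin n => α ^ Fintype.card F ^ (i : ℕ)) := by
    apply le_antisymm
    · rintro x ⟨f, rfl⟩
      rw [hT]
      have hmod : Polynomial.aeval φ f α =
          Polynomial.aeval φ (f %ₘ ((X : Polynomial F) ^ n - 1)) α := by
        conv_lhs => rw [← Polynomial.modByMonic_add_div f ((X : Polynomial F) ^ n - 1)]
        rw [map_add, map_mul, hG0, zero_mul, add_zero]
      rw [hmod]
      set r := f %ₘ ((X : Polynomial F) ^ n - 1) with hr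
      have hrdeg : r.natDegree < n := by
        by_cases h0 : r = 0
        · rw [h0]; simpa using hn
        · rw [Polynomial.natDegree_lt_iff_degree_lt h0]
          have hlt := Polynomial.degree_modByMonic_lt f hGm
          rw [← hr] at hlt
          refine hlt.trans_le ?_
          have hdeg : ((X : Polynomial F) ^ n - 1).degree = (n : WithBot ℕ) := by
            have := Polynomial.degree_X_pow_sub_C hn (1 : F)
            rwa [map_one] at this
          rw [hdeg]
      rw [Polynomial.aeval_eq_sum_range' hrdeg, LinearMap.sum_apply]
      apply Submodule.sum_mem
      intro i hi
      rw [LinearMap.smul_apply, frobL_pow_apply]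
      exact Submodule.smul_mem _ _
        (Submodule.subset_span ⟨⟨i, Finset.mem_range.1 hi⟩, rfl⟩)
    · rw [Submodule.span_le]
      rintro x ⟨i, rfl⟩
      exact ⟨X ^ (i : ℕ), by rw [hT, map_pow, Polynomial.aeval_X, frobL_pow_apply]⟩
  obtain ⟨h', hfac⟩ := hgdvd
  have hh'mon : h'.Monic := hgmon.of_mul_monic_left (by rw [← hfac]; exact hGm)
  have hge : Polynomial.aeval φ g α = 0 := (hsm g).2 dvd_rfl
  have hker : LinearMap.range T ≤ LinearMap.ker (Polynomial.aeval φ g) := by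
    rintro x ⟨f, rfl⟩
    rw [LinearMap.mem_ker, hT, ← Module.End.mul_apply, ← map_mul, mul_comm g f, map_mul,
      Module.End.mul_apply, hge]
    exact LinearMap.map_zero _
  have hub : Module.finrank F (LinearMap.range T) ≤ g.natDegree := by
    refine (Submodule.finrank_mono hker).trans ?_
    rw [finrank_ker_eq hdim hn hgmon hh'mon hfac.symm]
  have hlb : g.natDegree ≤ Module.finrank F (LinearMap.range T) := by
    have hd : Module.finrank F (Polynomial.degreeLT F g.natDegree) = g.natDegree := by
      rw [(Polynomial.degreeLTEquiv F g.natDegree).finrank_eq, Module.finrank_fin_fun]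
    have hinj : Function.Injective
        (T.comp (Submodule.subtype (Polynomial.degreeLT F g.natDegree))) := by
      rw [← LinearMap.ker_eq_bot, LinearMap.ker_eq_bot']
      rintro ⟨r, hr⟩ h0
      have hr0 : Polynomial.aeval φ r α = 0 := h0
      have hdvd := (hsm r).1 hr0
      have hrz : r = 0 := by
        refine Polynomial.eq_zero_of_dvd_of_degree_lt hdvd ?_
        calc r.degree < (g.natDegree : WithBot ℕ) := Polynomial.mem_degreeLT.1 hr
        _ = g.degree := (Polynomial.degree_eq_natDegree hgmon.ne_zero).symm
      exact Subtype.ext hrz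
    have h1 : Module.finrank F (LinearMap.range
        (T.comp (Submodule.subtype (Polynomial.degreeLT F g.natDegree)))) = g.natDegree := by
      rw [LinearMap.finrank_range_of_inj hinj, hd]
    rw [← h1]
    exact Submodule.finrank_mono (LinearMap.range_comp_le_range _ _)
  rw [← hrange] at *
  omega

end Span

section Final

set_option linter.unusedSectionVars false

variable {F E : Type*} [Field F] [Fintype F] [Field E] [Fintype E] [Algebra F E]

lemma card_smul_AEval {n : ℕ} (hdim : Module.finrank F E = n) (hn : 0 < n)
    (h : Polynomial F) (hmon : h.Monic) (hdvd : h ∣ (X : Polynomial F) ^ n - 1) :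
    Nat.card {m : Module.AEval' (frobL F E) | h • m = 0} =
      Fintype.card F ^ h.natDegree := by
  have e : Nat.card {m : Module.AEval' (frobL F E) | h • m = 0}
      = Nat.card {x : E | Polynomial.aeval (frobL F E) h x = 0} := by
    refine Nat.card_congr
      (Equiv.subtypeEquiv (Module.AEval.of F E (frobL F E)).symm.toEquiv fun m => ?_)
    simp only [Set.mem_setOf_eq]
    rw [← LinearEquiv.map_eq_zero_iff (Module.AEval.of F E (frobL F E)).symm,
      Module.AEval.of_symm_smul]
    exact Iff.rfl
  rw [e]
  exact card_ker_aeval hdim hn hmon hdvd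

lemma card_smul_quot {h : Polynomial F} (hmon : h.Monic) (h' : Polynomial F)
    (hm' : h'.Monic) (hd' : h' ∣ h) :
    Nat.card {u : Polynomial F ⧸ Ideal.span {h} | h' • u = 0} =
      Fintype.card F ^ h'.natDegree := by
  obtain ⟨d, rfl⟩ := hd'
  have hd0 : d ≠ 0 := by
    intro h0
    rw [h0, mul_zero] at hmon
    exact hmon.ne_zero rfl
  exact quot_card_smul h' d hm'.ne_zero hd0

lemma phiPoly_eq_card_pord {h : Polynomial F} (hmon : h.Monic) :
    PhiPoly h = Nat.card {u : Polynomial F ⧸ Ideal.span {h} | pord F u = h} := by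
  rw [PhiPoly]
  have toF : ∀ u : (Polynomial F ⧸ Ideal.span {h})ˣ,
      pord F (u : Polynomial F ⧸ Ideal.span {h}) = h :=
    fun u => (isUnit_iff_pord hmon _).1 u.isUnit
  have fromF : ∀ u : {u : Polynomial F ⧸ Ideal.span {h} | pord F u = h}, IsUnit u.1 :=
    fun u => (isUnit_iff_pord hmon u.1).2 u.2
  exact Nat.card_congr
    { toFun := fun u => ⟨(u : Polynomial F ⧸ Ideal.span {h}), toF u⟩
      invFun := fun u => (fromF u).unit
      left_inv := fun u => Units.ext ((fromF _).unit_spec)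
      right_inv := fun u => Subtype.ext ((fromF u).unit_spec) }

end Final

/-- The number of `k`-normal elements of `F_{q^n}` over `F_q` is
`Σ_{h ∣ x^n-1, deg h = n-k} Φ(h)`. -/
theorem stmt13 {F E : Type*} [Field F] [Fintype F] [Field E] [Fintype E] [Algebra F E]
    (q n k : ℕ) (hq : Fintype.card F = q) (hn : 0 < n) (hdim : Module.finrank F E = n)
    (hk : k ≤ n) :
    Nat.card {α : E | IskNormal q n k F α} =
      ∑ᶠ (h : Polynomial F)
        (_ : h.Monic ∧ h ∣ (X ^ n - 1 : Polynomial F) ∧ h.natDegree = n - k),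
        PhiPoly h := by
  classical
  subst hq
  haveI : FiniteDimensional F E := Module.Finite.of_finite
  haveI hAE : Finite (Module.AEval' (frobL F E)) := inferInstanceAs (Finite E)
  have hGm : ((X : Polynomial F) ^ n - 1).Monic := monic_G hn
  obtain ⟨D, hD⟩ := exists_monicDivisors ((X : Polynomial F) ^ n - 1) hGm.ne_zero
  set Dk := D.filter (fun h => h.natDegree = n - k) with hDk
  have hDkmem : ∀ h : Polynomial F, h ∈ Dk ↔
      (h.Monic ∧ h ∣ (X : Polynomial F) ^ n - 1 ∧ h.natDegree = n - k) := by
    intro h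
    rw [hDk, Finset.mem_filter, hD]
    tauto
  have hRHS : (∑ᶠ (h : Polynomial F)
      (_ : h.Monic ∧ h ∣ (X ^ n - 1 : Polynomial F) ∧ h.natDegree = n - k),
      PhiPoly h) = ∑ h ∈ Dk, PhiPoly h := by
    have hset : {h : Polynomial F |
        h.Monic ∧ h ∣ (X ^ n - 1 : Polynomial F) ∧ h.natDegree = n - k} = ↑Dk := by
      ext h
      rw [Set.mem_setOf_eq, Finset.mem_coe, hDkmem]
    rw [← finsum_mem_coe_finset, ← hset]
    rfl
  have hIsk : ∀ α : E, IskNormal (Fintype.card F) n k F α ↔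
      (pord F (Module.AEval.of F E (frobL F E) α)).natDegree = n - k := by
    intro α
    rw [IskNormal, finrank_span_conjugates hdim hn α]
  have hLHS : Nat.card {α : E | IskNormal (Fintype.card F) n k F α} =
      ∑ h ∈ Dk, Nat.card {α : E | pord F (Module.AEval.of F E (frobL F E) α) = h} := by
    refine nat_card_fiber_sum _ (fun α => pord F (Module.AEval.of F E (frobL F E) α))
      Dk ?_ ?_
    · intro α hα
      rw [hDkmem]
      have hne := torsionOf_of_ne_bot hdim hn α
      exact ⟨pord_monic hne, pord_dvd_G hdim hn α, (hIsk α).1 hα⟩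
    · intro α h hmem hc
      rw [hDkmem] at hmem
      have hc' : pord F (Module.AEval.of F E (frobL F E) α) = h := hc
      rw [Set.mem_setOf_eq, hIsk, hc']
      exact hmem.2.2
  rw [hLHS, hRHS]
  refine Finset.sum_congr rfl fun h hmem => ?_
  rw [hDkmem] at hmem
  obtain ⟨hmon, hdvd, hdeg⟩ := hmem
  haveI : Finite (Polynomial F ⧸ Ideal.span {h}) := quot_finite h hmon.ne_zero
  have e1 : Nat.card {α : E | pord F (Module.AEval.of F E (frobL F E) α) = h} =
      Nat.card {m : Module.AEval' (frobL F E) | pord F m = h} :=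
    Nat.card_congr
      (Equiv.subtypeEquiv (Module.AEval.of F E (frobL F E)).toEquiv fun α => Iff.rfl)
  have e2 := card_pord_eq (M₁ := Module.AEval' (frobL F E))
    (M₂ := Polynomial F ⧸ Ideal.span {h}) h.natDegree h rfl hmon
    (fun h' hm' hd' => card_smul_AEval hdim hn h' hm' (hd'.trans hdvd))
    (fun h' hm' hd' => card_smul_quot hmon h' hm' hd')
  rw [e1, e2, ← phiPoly_eq_card_pord hmon]
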